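/- Let 0<C<D<1, 2<k<11/5 with D^k<C, ε ∈ (0, min{(11−5k)/4, (5−2k)/3, (3−k)/2}), Z > 0, and λ ∈ (0,1) with D^k < λC. For n ≥ 0 set r_n = min{ (1−λ)C²·D^{2n(k−2+ε)}/(2Z), D^{2n(k−2+ε)}/(48Z), D^{4n(k−2+ε)/(3−k)}/2 }. Let g(z₁,z₂) = L(z₁,z₂) + (0, d·z₁²), where L is an invertible lower triangular 2×2 complex matrix whose diagonal entries a, b satisfy |a|, |b| ≥ C and ‖L^{−1}‖ ≤ 1/C, and d ∈ ℂ with |d| ≤ Z·D^{−2n(k−2+ε)}. Then for all z, w in the ball B(0, r_n) one has ‖g^{−1}(z) − g^{−1}(w)‖ ≤ (1/(λC))·‖z − w‖, and the same estimate holds for g∘M with M a unitary matrix. -/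

import Mathlib

open Set Filter Metric Topology

noncomputable section

/-- The radius `r_n = min{(1-λ)C²D^{2n(k-2+ε)}/(2Z), D^{2n(k-2+ε)}/(48Z),
D^{4n(k-2+ε)/(3-k)}/2}`. -/
def rSeq (C D k ε Z lam : ℝ) (n : ℕ) : ℝ :=
  min (min ((1 - lam) * C ^ 2 * D ^ (2 * (n : ℝ) * (k - 2 + ε)) / (2 * Z))
        (D ^ (2 * (n : ℝ) * (k - 2 + ε)) / (48 * Z)))
      (D ^ (4 * (n : ℝ) * (k - 2 + ε) / (3 - k)) / 2)

/-- The map `g(z,w) = (a z, b w + c z + d z²)`. -/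
def gMap (a b c d : ℂ) (z : ℂ × ℂ) : ℂ × ℂ :=
  (a * z.1, b * z.2 + c * z.1 + d * z.1 ^ 2)

/-- A homogeneous quadratic map of ℂ² with coefficient vector `cf`. -/
def quadMap (cf : Fin 6 → ℂ) (z : ℂ × ℂ) : ℂ × ℂ :=
  (cf 0 * z.1 ^ 2 + cf 1 * z.1 * z.2 + cf 2 * z.2 ^ 2,
   cf 3 * z.1 ^ 2 + cf 4 * z.1 * z.2 + cf 5 * z.2 ^ 2)

/-- The inverse `g⁻¹` of `g = L + (0, d z₁²)`, `L(z₁,z₂) = (a z₁, c z₁ + b z₂)`, is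
Lipschitz with constant `1/(λC)` on the ball `B(0,r_n)`; the same estimate holds for
`g ∘ M` with `M` unitary. -/
theorem inverse_lipschitz_estimate
    (C D k ε Z lam : ℝ) (n : ℕ) (a b c d : ℂ) (G : ℂ × ℂ → ℂ × ℂ)
    (hC : 0 < C) (hCD : C < D) (hD : D < 1)
    (hk2 : 2 < k) (hk : k < 11 / 5) (hDk : D ^ k < C)
    (hε : 0 < ε ∧ ε < min (min ((11 - 5 * k) / 4) ((5 - 2 * k) / 3)) ((3 - k) / 2))
    (hZ : 0 < Z) (hlam : 0 < lam ∧ lam < 1) (hDlam : D ^ k < lam * C)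
    (ha : C ≤ ‖a‖) (hb : C ≤ ‖b‖)
    -- `‖L⁻¹‖ ≤ 1/C`:
    (hLinv : ∀ z : ℂ × ℂ, ‖z‖ ≤ 1 / C * ‖((a * z.1, c * z.1 + b * z.2) : ℂ × ℂ)‖)
    (hd : ‖d‖ ≤ Z * D ^ (-(2 * (n : ℝ)) * (k - 2 + ε)))
    -- `G` is the inverse of `g`:
    (hG : Function.LeftInverse G (fun z : ℂ × ℂ => (a * z.1, c * z.1 + b * z.2 + d * z.1 ^ 2))
        ∧ Function.RightInverse G (fun z : ℂ × ℂ => (a * z.1, c * z.1 + b * z.2 + d * z.1 ^ 2))) :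
    (∀ z w : ℂ × ℂ, ‖z‖ < rSeq C D k ε Z lam n → ‖w‖ < rSeq C D k ε Z lam n →
      ‖G z - G w‖ ≤ 1 / (lam * C) * ‖z - w‖) ∧
    ∀ M : (ℂ × ℂ) ≃ₗᵢ[ℂ] (ℂ × ℂ), ∀ z w : ℂ × ℂ,
      ‖z‖ < rSeq C D k ε Z lam n → ‖w‖ < rSeq C D k ε Z lam n →
        ‖M.symm (G z) - M.symm (G w)‖ ≤ 1 / (lam * C) * ‖z - w‖ := by
  obtain ⟨hε0, hεlt⟩ := hε
  obtain ⟨hlam0, hlam1⟩ := hlam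
  have hD0 : (0:ℝ) < D := hC.trans hCD
  set e : ℝ := 2 * (n:ℝ) * (k - 2 + ε) with he
  have hDe : (0:ℝ) < D ^ e := Real.rpow_pos_of_pos hD0 _
  have hd' : ‖d‖ ≤ Z / D ^ e := by
    rw [div_eq_mul_inv, ← Real.rpow_neg hD0.le, ← neg_mul]
    exact hd
  have hmain : ∀ z w : ℂ × ℂ, ‖z‖ < rSeq C D k ε Z lam n → ‖w‖ < rSeq C D k ε Z lam n →
      ‖G z - G w‖ ≤ 1 / (lam * C) * ‖z - w‖ := by
    intro z w hz hw
    have hr : rSeq C D k ε Z lam n ≤ (1 - lam) * C ^ 2 * D ^ e / (2 * Z) :=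
      (min_le_left _ _).trans (min_le_left _ _)
    obtain ⟨-, hGr⟩ := hG
    have hgu := hGr z
    have hgv := hGr w
    set u := G z with hu
    set v := G w with hv
    have hu1 : a * u.1 = z.1 := congrArg Prod.fst hgu
    have hu2 : c * u.1 + b * u.2 + d * u.1 ^ 2 = z.2 := congrArg Prod.snd hgu
    have hv1 : a * v.1 = w.1 := congrArg Prod.fst hgv
    have hv2 : c * v.1 + b * v.2 + d * v.1 ^ 2 = w.2 := congrArg Prod.snd hgv
    have ha' : C ≤ ‖a‖ := by exact ha
    have hu1n : C * ‖u.1‖ ≤ ‖z‖ := by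
      calc C * ‖u.1‖ ≤ ‖a‖ * ‖u.1‖ := by gcongr
        _ = ‖a * u.1‖ := (norm_mul _ _).symm
        _ = ‖z.1‖ := by rw [hu1]
        _ ≤ ‖z‖ := norm_fst_le z
    have hv1n : C * ‖v.1‖ ≤ ‖w‖ := by
      calc C * ‖v.1‖ ≤ ‖a‖ * ‖v.1‖ := by gcongr
        _ = ‖a * v.1‖ := (norm_mul _ _).symm
        _ = ‖w.1‖ := by rw [hv1]
        _ ≤ ‖w‖ := norm_fst_le w
    -- bound on the sum
    have hrZ : rSeq C D k ε Z lam n * (2 * Z) ≤ (1 - lam) * C ^ 2 * D ^ e := by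
      rw [← le_div_iff₀ (by positivity)]
      exact hr
    have hS : ‖u.1‖ + ‖v.1‖ ≤ (1 - lam) * C * D ^ e / Z := by
      rw [le_div_iff₀ hZ]
      nlinarith [hu1n, hv1n, hz, hw, hrZ, hC, hZ]
    have hsum : ‖d‖ * (‖u.1‖ + ‖v.1‖) ≤ (1 - lam) * C := by
      have h1 : ‖d‖ * (‖u.1‖ + ‖v.1‖) ≤ (Z / D ^ e) * ((1 - lam) * C * D ^ e / Z) :=
        mul_le_mul hd' hS (by positivity) (by positivity)
      have h2 : (Z / D ^ e) * ((1 - lam) * C * D ^ e / Z) = (1 - lam) * C := by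
        field_simp
      rw [h2] at h1
      exact h1
    -- the linear algebra identity
    have heq : ((a * (u - v).1, c * (u - v).1 + b * (u - v).2) : ℂ × ℂ)
        = (z - w) + (0, -(d * (u.1 ^ 2 - v.1 ^ 2))) := by
      have e1 : a * (u - v).1 = (z - w).1 + 0 := by
        simp only [Prod.fst_sub]
        linear_combination hu1 - hv1
      have e2 : c * (u - v).1 + b * (u - v).2 = (z - w).2 + -(d * (u.1 ^ 2 - v.1 ^ 2)) := by
        simp only [Prod.fst_sub, Prod.snd_sub]
        linear_combination hu2 - hv2
      exact Prod.ext e1 e2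
    have hnorm : ‖((a * (u - v).1, c * (u - v).1 + b * (u - v).2) : ℂ × ℂ)‖
        ≤ ‖z - w‖ + ‖d‖ * (‖u.1‖ + ‖v.1‖) * ‖u - v‖ := by
      rw [heq]
      calc ‖(z - w) + ((0, -(d * (u.1 ^ 2 - v.1 ^ 2))) : ℂ × ℂ)‖
          ≤ ‖z - w‖ + ‖((0, -(d * (u.1 ^ 2 - v.1 ^ 2))) : ℂ × ℂ)‖ := norm_add_le _ _
        _ = ‖z - w‖ + ‖d * (u.1 ^ 2 - v.1 ^ 2)‖ := by
            congr 1
            simp only [Prod.norm_def, norm_neg, norm_zero]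
            exact max_eq_right (norm_nonneg _)
        _ ≤ ‖z - w‖ + ‖d‖ * (‖u.1‖ + ‖v.1‖) * ‖u - v‖ := by
            gcongr ‖z - w‖ + ?_
            have hfac : d * (u.1 ^ 2 - v.1 ^ 2) = d * (u.1 + v.1) * (u.1 - v.1) := by ring
            rw [hfac, norm_mul, norm_mul]
            have h1 : ‖u.1 + v.1‖ ≤ ‖u.1‖ + ‖v.1‖ := norm_add_le _ _
            have h2 : ‖u.1 - v.1‖ ≤ ‖u - v‖ := by
              have : u.1 - v.1 = (u - v).1 := rfl
              rw [this]
              exact norm_fst_le (u - v)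
            gcongr
    have hLa := hLinv (u - v)
    rw [one_div, inv_mul_eq_div, le_div_iff₀ hC] at hLa
    rw [one_div, inv_mul_eq_div, le_div_iff₀ (by positivity : (0:ℝ) < lam * C)]
    nlinarith [hLa, hnorm, hsum, norm_nonneg (u - v), norm_nonneg (z - w),
      mul_le_mul_of_nonneg_right hsum (norm_nonneg (u - v))]
  exact ⟨hmain, fun M z w hz hw => by
    rw [← LinearIsometryEquiv.map_sub, LinearIsometryEquiv.norm_map]
    exact hmain z w hz hw⟩
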